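/- Let φ¹ : Matrix (Fin n) (Fin n) ℂ → ℂ and φ² : Matrix (Fin m) (Fin m) ℂ → ℂ be positive linear functionals (φ(xᴴ * x) is a nonnegative real for all x), and let α : Matrix (Fin n) (Fin n) ℂ → Matrix (Fin n) (Fin n) ℂ be a positive linear map (α maps positive semidefinite matrices to positive semidefinite matrices). Then for every N and all families a : Fin N → Matrix (Fin n) (Fin n) ℂ and b : Fin N → Matrix (Fin m) (Fin m) ℂ, the sum Σ_{k,l ∈ Fin N} φ¹(α((a k)ᴴ * (a l))) · φ²((b k)ᴴ * (b l)) is a nonnegative real number. -/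

import Mathlib

open scoped ComplexOrder Matrix

lemma aux_conj {d : ℕ} (ψ : Matrix (Fin d) (Fin d) ℂ →ₗ[ℂ] ℂ)
    (hψ : ∀ x : Matrix (Fin d) (Fin d) ℂ, 0 ≤ ψ (xᴴ * x))
    (x y : Matrix (Fin d) (Fin d) ℂ) :
    ψ (yᴴ * x) = starRingEnd ℂ (ψ (xᴴ * y)) := by
  have him : ∀ z : Matrix (Fin d) (Fin d) ℂ, (ψ (zᴴ * z)).im = 0 := fun z =>
    ((Complex.nonneg_iff.mp (hψ z)).2).symm
  have h1 := him (x + y)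
  have h2 := him (x + Complex.I • y)
  have e1 : (x + y)ᴴ * (x + y) = xᴴ * x + (xᴴ * y + (yᴴ * x + yᴴ * y)) := by
    simp [Matrix.conjTranspose_add, Matrix.add_mul, Matrix.mul_add]; abel
  have e2 : (x + Complex.I • y)ᴴ * (x + Complex.I • y)
      = xᴴ * x + (Complex.I • (xᴴ * y) + (-(Complex.I • (yᴴ * x)) + yᴴ * y)) := by
    simp [Matrix.conjTranspose_add, Matrix.conjTranspose_smul, Matrix.add_mul, Matrix.mul_add,
      Matrix.smul_mul, Matrix.mul_smul, smul_smul, Complex.conj_I]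
    abel
  rw [e1] at h1
  rw [e2] at h2
  simp only [map_add, map_neg, map_smul, Complex.add_im, Complex.smul_im, him x, him y,
    smul_eq_mul, Complex.mul_im, Complex.I_re, Complex.I_im, Complex.neg_re,
    Complex.neg_im] at h1 h2
  apply Complex.ext <;> simp [Complex.conj_re, Complex.conj_im] <;> linarith

lemma aux_expand {d N : ℕ} (φ : Matrix (Fin d) (Fin d) ℂ →ₗ[ℂ] ℂ)
    (c : Fin N → ℂ) (b : Fin N → Matrix (Fin d) (Fin d) ℂ) :
    φ ((∑ k, c k • b k)ᴴ * (∑ l, c l • b l))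
      = ∑ k, ∑ l, (starRingEnd ℂ (c k) * c l) * φ ((b k)ᴴ * b l) := by
  have h : (∑ k, c k • b k)ᴴ * (∑ l, c l • b l)
      = ∑ k, ∑ l, (starRingEnd ℂ (c k) * c l) • ((b k)ᴴ * b l) := by
    rw [Matrix.conjTranspose_sum, Finset.sum_mul]
    refine Finset.sum_congr rfl fun k _ => ?_
    rw [Matrix.mul_sum]
    refine Finset.sum_congr rfl fun l _ => ?_
    rw [Matrix.conjTranspose_smul, Matrix.smul_mul, Matrix.mul_smul, smul_smul, RCLike.star_def]
  rw [h]
  simp [map_sum, map_smul, smul_eq_mul]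

/-- If `φ¹`, `φ²` are positive linear functionals on matrix algebras and `α` is a positive
linear map on `M_n(ℂ)`, then `Σ_{k,l} φ¹(α((a k)ᴴ (a l))) φ²((b k)ᴴ (b l)) ≥ 0`. -/
theorem stmt10 {n m : ℕ}
    (φ₁ : Matrix (Fin n) (Fin n) ℂ →ₗ[ℂ] ℂ)
    (φ₂ : Matrix (Fin m) (Fin m) ℂ →ₗ[ℂ] ℂ)
    (hφ₁ : ∀ x : Matrix (Fin n) (Fin n) ℂ, 0 ≤ φ₁ (xᴴ * x))
    (hφ₂ : ∀ x : Matrix (Fin m) (Fin m) ℂ, 0 ≤ φ₂ (xᴴ * x))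
    (α : Matrix (Fin n) (Fin n) ℂ →ₗ[ℂ] Matrix (Fin n) (Fin n) ℂ)
    (hα : ∀ x : Matrix (Fin n) (Fin n) ℂ, x.PosSemidef → (α x).PosSemidef)
    (N : ℕ) (a : Fin N → Matrix (Fin n) (Fin n) ℂ) (b : Fin N → Matrix (Fin m) (Fin m) ℂ) :
    0 ≤ ∑ k : Fin N, ∑ l : Fin N, φ₁ (α ((a k)ᴴ * a l)) * φ₂ ((b k)ᴴ * b l) := by
  classical
  set ψ : Matrix (Fin n) (Fin n) ℂ →ₗ[ℂ] ℂ := φ₁.comp α with hψdef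
  -- ψ is a positive functional
  have hψ : ∀ x : Matrix (Fin n) (Fin n) ℂ, 0 ≤ ψ (xᴴ * x) := by
    intro x
    obtain ⟨B, hB⟩ : ∃ B : Matrix (Fin n) (Fin n) ℂ, α (xᴴ * x) = Bᴴ * B := by
      open scoped MatrixOrder in
      exact CStarAlgebra.nonneg_iff_eq_star_mul_self.mp
        (hα _ (Matrix.posSemidef_conjTranspose_mul_self x)).nonneg
    simpa [hψdef, hB] using hφ₁ B
  -- the Gram-type matrix M
  set M : Matrix (Fin N) (Fin N) ℂ := Matrix.of fun k l => ψ ((a k)ᴴ * a l) with hMdef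
  have hMherm : M.IsHermitian := by
    ext k l
    simp only [Matrix.conjTranspose_apply, hMdef, Matrix.of_apply]
    rw [RCLike.star_def]
    exact (aux_conj ψ hψ (a l) (a k)).symm
  have hMpsd : M.PosSemidef := by
    refine Matrix.posSemidef_iff_dotProduct_mulVec.mpr ⟨hMherm, fun c => ?_⟩
    have key : star c ⬝ᵥ (M *ᵥ c) = ψ ((∑ k, c k • a k)ᴴ * (∑ l, c l • a l)) := by
      rw [aux_expand ψ c a]
      simp only [dotProduct, Matrix.mulVec, Pi.star_apply, Finset.mul_sum]
      refine Finset.sum_congr rfl fun k _ => Finset.sum_congr rfl fun l _ => ?_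
      simp only [hMdef, Matrix.of_apply, RCLike.star_def]
      ring
    rw [key]
    exact hψ _
  obtain ⟨C, hC⟩ : ∃ C : Matrix (Fin N) (Fin N) ℂ, M = Cᴴ * C := by
    open scoped MatrixOrder in
    exact CStarAlgebra.nonneg_iff_eq_star_mul_self.mp hMpsd.nonneg
  have hMentry : ∀ k l, M k l = ∑ j, starRingEnd ℂ (C j k) * C j l := by
    intro k l
    rw [hC]
    simp [Matrix.mul_apply, Matrix.conjTranspose_apply]
  have step : ∑ k : Fin N, ∑ l : Fin N, φ₁ (α ((a k)ᴴ * a l)) * φ₂ ((b k)ᴴ * b l)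
      = ∑ j : Fin N, φ₂ ((∑ k, C j k • b k)ᴴ * (∑ l, C j l • b l)) := by
    have lhs_eq : ∀ k l : Fin N, φ₁ (α ((a k)ᴴ * a l)) * φ₂ ((b k)ᴴ * b l)
        = ∑ j, (starRingEnd ℂ (C j k) * C j l) * φ₂ ((b k)ᴴ * b l) := by
      intro k l
      rw [show φ₁ (α ((a k)ᴴ * a l)) = M k l from rfl, hMentry, Finset.sum_mul]
    calc ∑ k : Fin N, ∑ l : Fin N, φ₁ (α ((a k)ᴴ * a l)) * φ₂ ((b k)ᴴ * b l)
        = ∑ k : Fin N, ∑ l : Fin N, ∑ j : Fin N,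
            (starRingEnd ℂ (C j k) * C j l) * φ₂ ((b k)ᴴ * b l) := by
          exact Finset.sum_congr rfl fun k _ => Finset.sum_congr rfl fun l _ => lhs_eq k l
      _ = ∑ k : Fin N, ∑ j : Fin N, ∑ l : Fin N,
            (starRingEnd ℂ (C j k) * C j l) * φ₂ ((b k)ᴴ * b l) :=
          Finset.sum_congr rfl fun k _ => Finset.sum_comm
      _ = ∑ j : Fin N, ∑ k : Fin N, ∑ l : Fin N,
            (starRingEnd ℂ (C j k) * C j l) * φ₂ ((b k)ᴴ * b l) := Finset.sum_comm
      _ = ∑ j : Fin N, φ₂ ((∑ k, C j k • b k)ᴴ * (∑ l, C j l • b l)) := by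
          exact Finset.sum_congr rfl fun j _ => (aux_expand φ₂ (C j) b).symm
  rw [step]
  exact Finset.sum_nonneg fun j _ => hφ₂ _
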